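/- Key step of Theorem 3.1 (optimal projection): with the notation of the EOT characterization, for any coupling π ∈ Π(p₀,p₁) and any Schrödinger-bridge plan π^S of the form π^S(x₀,x₁) = p₀^S(x₀)·exp(⟨x₀,x₁⟩/ε)·v^S(x₁)/c_{v^S}(x₀), one has KL(π ‖ π^S) = Ĉ(π) + KL(π* ‖ π^S), where π* is the EOT plan between p₀ and p₁ and Ĉ(π) = −H(π) + H(π*) + (1/ε)[∫⟨x₀,x₁⟩dπ* − ∫⟨x₀,x₁⟩dπ] is independent of π^S. Consequently, arg min over π^S of KL(π‖π^S) equals arg min over π^S of KL(π*‖π^S), attained at π^S = π*. -/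

import Mathlib

open Real MeasureTheory

noncomputable section

abbrev Euc (D : ℕ) := EuclideanSpace ℝ (Fin D)

section AuxOPKS
open Filter

lemma clamp_add_abs_le {n : ℝ} (hn : 0 ≤ n) (a b : ℝ) :
    |max (-n) (min n a) + max (-n) (min n b)| ≤ |a + b| := by
  have h1 := le_abs_self (a + b)
  have h2 := neg_abs_le (a + b)
  have h3 := abs_nonneg (a + b)
  have hca_le : max (-n) (min n a) ≤ n := max_le (by linarith) (min_le_left _ _)
  have hcb_le : max (-n) (min n b) ≤ n := max_le (by linarith) (min_le_left _ _)
  have hca_ge : -n ≤ max (-n) (min n a) := le_max_left _ _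
  have hcb_ge : -n ≤ max (-n) (min n b) := le_max_left _ _
  rw [abs_le]
  constructor
  · rcases le_total a n with ha | ha
    · rcases le_total b n with hb | hb
      · have e1 : a ≤ max (-n) (min n a) := by rw [min_eq_right ha]; exact le_max_right _ _
        have e2 : b ≤ max (-n) (min n b) := by rw [min_eq_right hb]; exact le_max_right _ _
        linarith
      · have e2 : n ≤ max (-n) (min n b) :=
          le_trans (le_min le_rfl hb) (le_max_right _ _)
        linarith
    · have e1 : n ≤ max (-n) (min n a) :=
        le_trans (le_min le_rfl ha) (le_max_right _ _)
      linarith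
  · rcases le_total (-n) a with ha | ha
    · rcases le_total (-n) b with hb | hb
      · have e1 : max (-n) (min n a) ≤ a := max_le ha (min_le_right _ _)
        have e2 : max (-n) (min n b) ≤ b := max_le hb (min_le_right _ _)
        linarith
      · have e2 : max (-n) (min n b) ≤ -n := max_le le_rfl (le_trans (min_le_right _ _) hb)
        linarith
    · have e1 : max (-n) (min n a) ≤ -n := max_le le_rfl (le_trans (min_le_right _ _) ha)
      linarith

lemma tendsto_clamp (t : ℝ) :
    Tendsto (fun n : ℕ => max (-(n : ℝ)) (min (n : ℝ) t)) atTop (nhds t) := by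
  refine Tendsto.congr' ?_ (tendsto_const_nhds (x := t))
  filter_upwards [eventually_ge_atTop ⌈|t|⌉₊] with n hn
  have h : |t| ≤ (n : ℝ) := le_trans (Nat.le_ceil _) (by exact_mod_cast hn)
  rw [abs_le] at h
  rw [min_eq_right h.2, max_eq_right h.1]

/-- Central lemma: two nonnegative integrable densities on a product space with the same
(pointwise) marginals integrate a sum `A(x)+B(y)` identically, provided the products are
integrable. -/
lemma marginal_integral_eq (D : ℕ) (P Q : Euc D → Euc D → ℝ) (A B : Euc D → ℝ)
    (hPnn : ∀ x y, 0 ≤ P x y) (hQnn : ∀ x y, 0 ≤ Q x y)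
    (hPint : Integrable (fun q : Euc D × Euc D => P q.1 q.2))
    (hQint : Integrable (fun q : Euc D × Euc D => Q q.1 q.2))
    (hm0 : ∀ x, (∫ y, P x y) = ∫ y, Q x y)
    (hm1 : ∀ y, (∫ x, P x y) = ∫ x, Q x y)
    (hA : AEStronglyMeasurable A (volume : Measure (Euc D)))
    (hB : AEStronglyMeasurable B (volume : Measure (Euc D)))
    (hPf : Integrable (fun q : Euc D × Euc D => P q.1 q.2 * (A q.1 + B q.2)))
    (hQf : Integrable (fun q : Euc D × Euc D => Q q.1 q.2 * (A q.1 + B q.2))) :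
    ∫ q : Euc D × Euc D, P q.1 q.2 * (A q.1 + B q.2)
      = ∫ q : Euc D × Euc D, Q q.1 q.2 * (A q.1 + B q.2) := by
  have hAfst : AEStronglyMeasurable (fun q : Euc D × Euc D => A q.1) volume := by
    rw [Measure.volume_eq_prod]; exact hA.comp_fst
  have hBsnd : AEStronglyMeasurable (fun q : Euc D × Euc D => B q.2) volume := by
    rw [Measure.volume_eq_prod]; exact hB.comp_snd
  have hcont : ∀ n : ℕ, Continuous fun t : ℝ => max (-(n : ℝ)) (min (n : ℝ) t) :=
    fun n => continuous_const.max (continuous_const.min continuous_id)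
  -- the truncated computation, for a generic nonnegative integrable density R
  have main : ∀ (R : Euc D → Euc D → ℝ), (∀ x y, 0 ≤ R x y) →
      Integrable (fun q : Euc D × Euc D => R q.1 q.2) →
      ∀ n : ℕ,
      ∫ q : Euc D × Euc D, R q.1 q.2
          * (max (-(n : ℝ)) (min (n : ℝ) (A q.1)) + max (-(n : ℝ)) (min (n : ℝ) (B q.2)))
        = (∫ x, (∫ y, R x y) * max (-(n : ℝ)) (min (n : ℝ) (A x)))
          + ∫ y, (∫ x, R x y) * max (-(n : ℝ)) (min (n : ℝ) (B y)) := by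
    intro R hRnn hRint n
    have hclamp_bd : ∀ t : ℝ, |max (-(n : ℝ)) (min (n : ℝ) t)| ≤ (n : ℝ) := by
      intro t
      rw [abs_le]
      exact ⟨le_max_left _ _, max_le (neg_le_self (Nat.cast_nonneg n)) (min_le_left _ _)⟩
    have hclA : AEStronglyMeasurable
        (fun q : Euc D × Euc D => max (-(n : ℝ)) (min (n : ℝ) (A q.1))) volume :=
      (hcont n).comp_aestronglyMeasurable hAfst
    have hclB : AEStronglyMeasurable
        (fun q : Euc D × Euc D => max (-(n : ℝ)) (min (n : ℝ) (B q.2))) volume :=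
      (hcont n).comp_aestronglyMeasurable hBsnd
    have iA : Integrable (fun q : Euc D × Euc D =>
        R q.1 q.2 * max (-(n : ℝ)) (min (n : ℝ) (A q.1))) := by
      refine Integrable.mono (hRint.const_mul (n : ℝ)) (hRint.1.mul hclA) ?_
      filter_upwards with q
      rw [norm_mul, norm_mul, Real.norm_eq_abs, Real.norm_eq_abs, Real.norm_eq_abs,
        abs_of_nonneg (hRnn _ _)]
      calc R q.1 q.2 * |max (-(n : ℝ)) (min (n : ℝ) (A q.1))|
          ≤ R q.1 q.2 * (n : ℝ) := by
            exact mul_le_mul_of_nonneg_left (hclamp_bd _) (hRnn _ _)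
        _ ≤ |(n : ℝ)| * (R q.1 q.2) := by
            rw [abs_of_nonneg (by positivity : (0:ℝ) ≤ (n:ℝ))]; ring_nf; exact le_rfl
    have iB : Integrable (fun q : Euc D × Euc D =>
        R q.1 q.2 * max (-(n : ℝ)) (min (n : ℝ) (B q.2))) := by
      refine Integrable.mono (hRint.const_mul (n : ℝ)) (hRint.1.mul hclB) ?_
      filter_upwards with q
      rw [norm_mul, norm_mul, Real.norm_eq_abs, Real.norm_eq_abs, Real.norm_eq_abs,
        abs_of_nonneg (hRnn _ _)]
      calc R q.1 q.2 * |max (-(n : ℝ)) (min (n : ℝ) (B q.2))|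
          ≤ R q.1 q.2 * (n : ℝ) := by
            exact mul_le_mul_of_nonneg_left (hclamp_bd _) (hRnn _ _)
        _ ≤ |(n : ℝ)| * (R q.1 q.2) := by
            rw [abs_of_nonneg (by positivity : (0:ℝ) ≤ (n:ℝ))]; ring_nf; exact le_rfl
    have hsplit : (fun q : Euc D × Euc D => R q.1 q.2
          * (max (-(n : ℝ)) (min (n : ℝ) (A q.1)) + max (-(n : ℝ)) (min (n : ℝ) (B q.2))))
        = fun q : Euc D × Euc D => R q.1 q.2 * max (-(n : ℝ)) (min (n : ℝ) (A q.1))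
            + R q.1 q.2 * max (-(n : ℝ)) (min (n : ℝ) (B q.2)) := by
      funext q; ring
    rw [hsplit, integral_add iA iB]
    congr 1
    · rw [Measure.volume_eq_prod] at iA ⊢
      rw [integral_prod _ iA]
      simp only [integral_mul_const]
    · rw [Measure.volume_eq_prod] at iB ⊢
      rw [integral_prod_symm _ iB]
      simp only [integral_mul_const]
  have key : ∀ n : ℕ,
      ∫ q : Euc D × Euc D, P q.1 q.2
          * (max (-(n : ℝ)) (min (n : ℝ) (A q.1)) + max (-(n : ℝ)) (min (n : ℝ) (B q.2)))
        = ∫ q : Euc D × Euc D, Q q.1 q.2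
          * (max (-(n : ℝ)) (min (n : ℝ) (A q.1)) + max (-(n : ℝ)) (min (n : ℝ) (B q.2))) := by
    intro n
    rw [main P hPnn hPint n, main Q hQnn hQint n]
    simp only [hm0, hm1]
  -- dominated convergence for both P and Q
  have hdct : ∀ (R : Euc D → Euc D → ℝ), (∀ x y, 0 ≤ R x y) →
      Integrable (fun q : Euc D × Euc D => R q.1 q.2) →
      Integrable (fun q : Euc D × Euc D => R q.1 q.2 * (A q.1 + B q.2)) →
      Tendsto (fun n : ℕ => ∫ q : Euc D × Euc D, R q.1 q.2
          * (max (-(n : ℝ)) (min (n : ℝ) (A q.1)) + max (-(n : ℝ)) (min (n : ℝ) (B q.2))))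
        atTop (nhds (∫ q : Euc D × Euc D, R q.1 q.2 * (A q.1 + B q.2))) := by
    intro R hRnn hRint hRf
    refine tendsto_integral_of_dominated_convergence
      (fun q => |R q.1 q.2 * (A q.1 + B q.2)|) ?_ hRf.abs ?_ ?_
    · intro n
      exact hRint.1.mul
        (((hcont n).comp_aestronglyMeasurable hAfst).add
          ((hcont n).comp_aestronglyMeasurable hBsnd))
    · intro n
      filter_upwards with q
      rw [Real.norm_eq_abs, abs_mul, abs_mul, abs_of_nonneg (hRnn _ _)]
      exact mul_le_mul_of_nonneg_left
        (clamp_add_abs_le (by positivity) _ _) (hRnn _ _)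
    · filter_upwards with q
      exact ((tendsto_clamp (A q.1)).add (tendsto_clamp (B q.2))).const_mul _
  exact tendsto_nhds_unique (hdct P hPnn hPint hPf)
    ((hdct Q hQnn hQint hQf).congr fun n => (key n).symm)


end AuxOPKS

/-- Key step of the optimal projection theorem: for any coupling `π ∈ Π(p₀,p₁)` and any
Schrödinger-bridge plan `π^S(x₀,x₁) = p₀^S(x₀) exp(⟨x₀,x₁⟩/ε) v^S(x₁)/c_{v^S}(x₀)`,
`KL(π‖π^S) = Ĉ(π) + KL(π*‖π^S)` where `π*` is the EOT plan between `p₀,p₁` (itself of the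
exponential form with marginal `p₀` and potential `v*`) and
`Ĉ(π) = −H(π) + H(π*) + (1/ε)[∫⟨x₀,x₁⟩dπ* − ∫⟨x₀,x₁⟩dπ]` does not depend on `π^S`;
consequently the minimum of `KL(π‖·)` over such plans is attained at `π^S = π*`. -/
theorem optimal_projection_key_step (D : ℕ) (ε : ℝ) (hε : 0 < ε)
    (p0 p1 p0S vstar vS cstar cS : Euc D → ℝ)
    (P Pstar PS : Euc D → Euc D → ℝ)
    (hvstarpos : ∀ x1, 0 < vstar x1) (hvSpos : ∀ x1, 0 < vS x1)
    (hp0Spos : ∀ x0, 0 < p0S x0) (hp0nn : ∀ x0, 0 ≤ p0 x0)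
    (hPnn : ∀ x0 x1, 0 ≤ P x0 x1) (hPstarnn : ∀ x0 x1, 0 ≤ Pstar x0 x1)
    (hcstar : ∀ x0, cstar x0 = ∫ x1, Real.exp ((inner ℝ x0 x1 : ℝ) / ε) * vstar x1)
    (hcS : ∀ x0, cS x0 = ∫ x1, Real.exp ((inner ℝ x0 x1 : ℝ) / ε) * vS x1)
    (hcstarpos : ∀ x0, 0 < cstar x0) (hcSpos : ∀ x0, 0 < cS x0)
    (hPstar : ∀ x0 x1, Pstar x0 x1
      = p0 x0 * Real.exp ((inner ℝ x0 x1 : ℝ) / ε) * vstar x1 / cstar x0)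
    (hPS : ∀ x0 x1, PS x0 x1
      = p0S x0 * Real.exp ((inner ℝ x0 x1 : ℝ) / ε) * vS x1 / cS x0)
    -- π and π* are couplings of (p₀, p₁); π* and π^S are probability densities
    (hPm0 : ∀ x0, ∫ x1, P x0 x1 = p0 x0) (hPm1 : ∀ x1, ∫ x0, P x0 x1 = p1 x1)
    (hPstarm0 : ∀ x0, ∫ x1, Pstar x0 x1 = p0 x0)
    (hPstarm1 : ∀ x1, ∫ x0, Pstar x0 x1 = p1 x1)
    (hPprob : ∫ q : Euc D × Euc D, P q.1 q.2 = 1)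
    (hPstarprob : ∫ q : Euc D × Euc D, Pstar q.1 q.2 = 1)
    (hPSprob : ∫ q : Euc D × Euc D, PS q.1 q.2 = 1)
    (hac : ∀ x0 x1, PS x0 x1 = 0 → P x0 x1 = 0)
    (hacstar : ∀ x0 x1, Pstar x0 x1 = 0 → P x0 x1 = 0)
    -- integrability of all involved integrands
    (hint1 : Integrable (fun q : Euc D × Euc D =>
      P q.1 q.2 * Real.log (P q.1 q.2 / PS q.1 q.2)))
    (hint2 : Integrable (fun q : Euc D × Euc D =>
      Pstar q.1 q.2 * Real.log (Pstar q.1 q.2 / PS q.1 q.2)))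
    (hint2' : Integrable (fun q : Euc D × Euc D =>
      P q.1 q.2 * Real.log (P q.1 q.2 / Pstar q.1 q.2)))
    (hint3 : Integrable (fun q : Euc D × Euc D => (inner ℝ q.1 q.2 : ℝ) * P q.1 q.2))
    (hint4 : Integrable (fun q : Euc D × Euc D => (inner ℝ q.1 q.2 : ℝ) * Pstar q.1 q.2))
    (hint5 : Integrable (fun q : Euc D × Euc D => P q.1 q.2 * Real.log (P q.1 q.2)))
    (hint6 : Integrable (fun q : Euc D × Euc D =>
      Pstar q.1 q.2 * Real.log (Pstar q.1 q.2)))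
    -- Ĉ(π)
    (Chat : ℝ)
    (hChat : Chat
      = -(-∫ q : Euc D × Euc D, P q.1 q.2 * Real.log (P q.1 q.2))
          + (-∫ q : Euc D × Euc D, Pstar q.1 q.2 * Real.log (Pstar q.1 q.2))
          + (1 / ε) * ((∫ q : Euc D × Euc D, (inner ℝ q.1 q.2 : ℝ) * Pstar q.1 q.2)
              - ∫ q : Euc D × Euc D, (inner ℝ q.1 q.2 : ℝ) * P q.1 q.2)) :
    (∫ q : Euc D × Euc D, P q.1 q.2 * Real.log (P q.1 q.2 / PS q.1 q.2))
        = Chat + ∫ q : Euc D × Euc D, Pstar q.1 q.2 * Real.log (Pstar q.1 q.2 / PS q.1 q.2)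
      ∧ (∫ q : Euc D × Euc D, P q.1 q.2 * Real.log (P q.1 q.2 / Pstar q.1 q.2))
          ≤ ∫ q : Euc D × Euc D, P q.1 q.2 * Real.log (P q.1 q.2 / PS q.1 q.2) := by

  -- positivity facts
  have hPSpos : ∀ x0 x1, 0 < PS x0 x1 := by
    intro x0 x1
    rw [hPS]
    exact div_pos (mul_pos (mul_pos (hp0Spos x0) (Real.exp_pos _)) (hvSpos x1)) (hcSpos x0)
  have hPstarpos : ∀ x0 x1, P x0 x1 ≠ 0 → 0 < Pstar x0 x1 := by
    intro x0 x1 h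
    rcases (hPstarnn x0 x1).lt_or_eq with h' | h'
    · exact h'
    · exact absurd (hacstar x0 x1 h'.symm) h
  have hp0pos : ∀ x0 x1, Pstar x0 x1 ≠ 0 → 0 < p0 x0 := by
    intro x0 x1 h
    rcases (hp0nn x0).lt_or_eq with h' | h'
    · exact h'
    · exfalso; apply h; rw [hPstar, ← h']; simp
  -- integrability of the densities
  have iP : Integrable (fun q : Euc D × Euc D => P q.1 q.2) := by
    by_contra h; rw [integral_undef h] at hPprob; norm_num at hPprob
  have iPstar : Integrable (fun q : Euc D × Euc D => Pstar q.1 q.2) := by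
    by_contra h; rw [integral_undef h] at hPstarprob; norm_num at hPstarprob
  have iPS : Integrable (fun q : Euc D × Euc D => PS q.1 q.2) := by
    by_contra h; rw [integral_undef h] at hPSprob; norm_num at hPSprob
  -- vstar, vS are integrable
  have ivstar : Integrable vstar := by
    have h0 := hcstar 0
    have he : (fun x1 : Euc D => Real.exp ((inner ℝ (0 : Euc D) x1 : ℝ) / ε) * vstar x1)
        = vstar := by
      funext x1; simp [inner_zero_left, Real.exp_zero]
    rw [he] at h0
    by_contra h; rw [integral_undef h] at h0; exact (hcstarpos 0).ne' h0
  have ivS : Integrable vS := by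
    have h0 := hcS 0
    have he : (fun x1 : Euc D => Real.exp ((inner ℝ (0 : Euc D) x1 : ℝ) / ε) * vS x1)
        = vS := by
      funext x1; simp [inner_zero_left, Real.exp_zero]
    rw [he] at h0
    by_contra h; rw [integral_undef h] at h0; exact (hcSpos 0).ne' h0
  -- measurability facts
  have mexp : Continuous (fun q : Euc D × Euc D => Real.exp ((inner ℝ q.1 q.2 : ℝ) / ε)) :=
    Real.continuous_exp.comp ((continuous_inner (𝕜 := ℝ) (E := Euc D)).div_const ε)
  have mC : ∀ (v : Euc D → ℝ), Integrable v → AEStronglyMeasurable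
      (fun x0 : Euc D => ∫ x1, Real.exp ((inner ℝ x0 x1 : ℝ) / ε) * v x1)
      (volume : Measure (Euc D)) := by
    intro v hv
    have hjoint : AEStronglyMeasurable
        (fun q : Euc D × Euc D => Real.exp ((inner ℝ q.1 q.2 : ℝ) / ε) * v q.2)
        ((volume : Measure (Euc D)).prod volume) :=
      (mexp.aestronglyMeasurable).mul hv.1.comp_snd
    exact hjoint.integral_prod_right'
  have mcstar : AEStronglyMeasurable cstar (volume : Measure (Euc D)) :=
    (mC vstar ivstar).congr (Filter.Eventually.of_forall fun x0 => (hcstar x0).symm)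
  have mcS : AEStronglyMeasurable cS (volume : Measure (Euc D)) :=
    (mC vS ivS).congr (Filter.Eventually.of_forall fun x0 => (hcS x0).symm)
  have mp0 : AEStronglyMeasurable p0 (volume : Measure (Euc D)) := by
    have h := iPstar.1
    rw [Measure.volume_eq_prod] at h
    exact h.integral_prod_right'.congr
      (Filter.Eventually.of_forall fun x0 => hPstarm0 x0)
  -- measurability of p0S via a measurable slice of PS
  have hvol : (volume : Measure (Euc D)) ≠ 0 := by
    intro h0
    have h2 := hcstar 0
    rw [h0, integral_zero_measure] at h2
    exact (hcstarpos 0).ne' h2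
  haveI : (ae (volume : Measure (Euc D))).NeBot := ae_neBot.mpr hvol
  have hswap : AEStronglyMeasurable (fun z : Euc D × Euc D => PS z.2 z.1)
      ((volume : Measure (Euc D)).prod volume) := by
    have h := iPS.1
    rw [Measure.volume_eq_prod] at h
    exact h.prod_swap
  obtain ⟨x1₀, hx1₀⟩ := hswap.prodMk_left.exists
  have hp0S_eq : p0S = fun x0 => PS x0 x1₀ * cS x0
      / (Real.exp ((inner ℝ x0 x1₀ : ℝ) / ε) * vS x1₀) := by
    funext x0
    have h1 : cS x0 ≠ 0 := (hcSpos x0).ne'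
    have h2 : Real.exp ((inner ℝ x0 x1₀ : ℝ) / ε) ≠ 0 := (Real.exp_pos _).ne'
    have h3 : vS x1₀ ≠ 0 := (hvSpos x1₀).ne'
    rw [hPS]
    field_simp
  have mp0S : AEStronglyMeasurable p0S (volume : Measure (Euc D)) := by
    rw [hp0S_eq]
    have hc : Continuous (fun x0 : Euc D =>
        Real.exp ((inner ℝ x0 x1₀ : ℝ) / ε) * vS x1₀) :=
      (Real.continuous_exp.comp
        ((continuous_id.inner continuous_const).div_const ε)).mul continuous_const
    exact ((hx1₀.aemeasurable.mul mcS.aemeasurable).div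
      hc.measurable.aemeasurable).aestronglyMeasurable
  have mlog : ∀ (f : Euc D → ℝ), AEStronglyMeasurable f (volume : Measure (Euc D)) →
      AEStronglyMeasurable (fun x => Real.log (f x)) (volume : Measure (Euc D)) :=
    fun f hf => (Real.measurable_log.comp_aemeasurable hf.aemeasurable).aestronglyMeasurable
  -- marginal equalities
  have hm0 : ∀ x, (∫ y, P x y) = ∫ y, Pstar x y :=
    fun x => (hPm0 x).trans (hPstarm0 x).symm
  have hm1 : ∀ y, (∫ x, P x y) = ∫ x, Pstar x y :=
    fun y => (hPm1 y).trans (hPstarm1 y).symm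
  -- log expansions
  have Hstar : ∀ x0 x1, p0 x0 ≠ 0 → Real.log (Pstar x0 x1)
      = Real.log (p0 x0) + (inner ℝ x0 x1 : ℝ) / ε + Real.log (vstar x1)
        - Real.log (cstar x0) := by
    intro x0 x1 h
    rw [hPstar,
      Real.log_div (mul_ne_zero (mul_ne_zero h (Real.exp_pos _).ne') (hvstarpos x1).ne')
        (hcstarpos x0).ne',
      Real.log_mul (mul_ne_zero h (Real.exp_pos _).ne') (hvstarpos x1).ne',
      Real.log_mul h (Real.exp_pos _).ne', Real.log_exp]
  have HS : ∀ x0 x1, Real.log (PS x0 x1)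
      = Real.log (p0S x0) + (inner ℝ x0 x1 : ℝ) / ε + Real.log (vS x1)
        - Real.log (cS x0) := by
    intro x0 x1
    rw [hPS,
      Real.log_div (mul_ne_zero (mul_ne_zero (hp0Spos x0).ne' (Real.exp_pos _).ne')
        (hvSpos x1).ne') (hcSpos x0).ne',
      Real.log_mul (mul_ne_zero (hp0Spos x0).ne' (Real.exp_pos _).ne') (hvSpos x1).ne',
      Real.log_mul (hp0Spos x0).ne' (Real.exp_pos _).ne', Real.log_exp]
  -- pointwise identities
  have E2 : ∀ x0 x1, P x0 x1 * Real.log (P x0 x1 / Pstar x0 x1)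
      = P x0 x1 * Real.log (P x0 x1) - P x0 x1 * Real.log (Pstar x0 x1) := by
    intro x0 x1
    by_cases h : P x0 x1 = 0
    · simp [h]
    · rw [Real.log_div h (hPstarpos x0 x1 h).ne']; ring
  have E4 : ∀ x0 x1, P x0 x1 * Real.log (Pstar x0 x1 / PS x0 x1)
      = P x0 x1 * Real.log (P x0 x1 / PS x0 x1)
        - P x0 x1 * Real.log (P x0 x1 / Pstar x0 x1) := by
    intro x0 x1
    by_cases h : P x0 x1 = 0
    · simp [h]
    · rw [Real.log_div (hPstarpos x0 x1 h).ne' (hPSpos x0 x1).ne',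
        Real.log_div h (hPSpos x0 x1).ne', Real.log_div h (hPstarpos x0 x1 h).ne']
      ring
  have iPlogPstar : Integrable
      (fun q : Euc D × Euc D => P q.1 q.2 * Real.log (Pstar q.1 q.2)) := by
    refine (hint5.sub hint2').congr (Filter.Eventually.of_forall fun q => ?_)
    have h := E2 q.1 q.2
    simp only [Pi.sub_apply]
    linarith
  -- Application 2 of the central lemma : A₂ ⊕ B₂ = log Pstar - ⟨⟩/ε
  have EP2 : ∀ x0 x1,
      P x0 x1 * ((Real.log (p0 x0) - Real.log (cstar x0)) + Real.log (vstar x1))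
      = P x0 x1 * Real.log (Pstar x0 x1) - (inner ℝ x0 x1 : ℝ) * P x0 x1 / ε := by
    intro x0 x1
    by_cases h : P x0 x1 = 0
    · simp [h]
    · rw [Hstar x0 x1 (hp0pos x0 x1 (hPstarpos x0 x1 h).ne').ne']; ring
  have EQ2 : ∀ x0 x1,
      Pstar x0 x1 * ((Real.log (p0 x0) - Real.log (cstar x0)) + Real.log (vstar x1))
      = Pstar x0 x1 * Real.log (Pstar x0 x1) - (inner ℝ x0 x1 : ℝ) * Pstar x0 x1 / ε := by
    intro x0 x1
    by_cases h : Pstar x0 x1 = 0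
    · simp [h]
    · rw [Hstar x0 x1 (hp0pos x0 x1 h).ne']; ring
  have iPf2 : Integrable (fun q : Euc D × Euc D =>
      P q.1 q.2 * ((Real.log (p0 q.1) - Real.log (cstar q.1)) + Real.log (vstar q.2))) :=
    (iPlogPstar.sub (hint3.div_const ε)).congr
      (Filter.Eventually.of_forall fun q => (EP2 q.1 q.2).symm)
  have iQf2 : Integrable (fun q : Euc D × Euc D =>
      Pstar q.1 q.2 * ((Real.log (p0 q.1) - Real.log (cstar q.1)) + Real.log (vstar q.2))) :=
    (hint6.sub (hint4.div_const ε)).congr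
      (Filter.Eventually.of_forall fun q => (EQ2 q.1 q.2).symm)
  have R2 := marginal_integral_eq D P Pstar
    (fun x0 => Real.log (p0 x0) - Real.log (cstar x0)) (fun x1 => Real.log (vstar x1))
    hPnn hPstarnn iP iPstar hm0 hm1
    ((mlog p0 mp0).sub (mlog cstar mcstar)) (mlog vstar ivstar.1) iPf2 iQf2
  have intP2 : ∫ q : Euc D × Euc D,
      P q.1 q.2 * ((Real.log (p0 q.1) - Real.log (cstar q.1)) + Real.log (vstar q.2))
      = (∫ q : Euc D × Euc D, P q.1 q.2 * Real.log (Pstar q.1 q.2))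
        - (∫ q : Euc D × Euc D, (inner ℝ q.1 q.2 : ℝ) * P q.1 q.2) / ε := by
    rw [← integral_div, ← integral_sub iPlogPstar (hint3.div_const ε)]
    exact integral_congr_ae (Filter.Eventually.of_forall fun q => EP2 q.1 q.2)
  have intQ2 : ∫ q : Euc D × Euc D,
      Pstar q.1 q.2 * ((Real.log (p0 q.1) - Real.log (cstar q.1)) + Real.log (vstar q.2))
      = (∫ q : Euc D × Euc D, Pstar q.1 q.2 * Real.log (Pstar q.1 q.2))
        - (∫ q : Euc D × Euc D, (inner ℝ q.1 q.2 : ℝ) * Pstar q.1 q.2) / ε := by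
    rw [← integral_div, ← integral_sub hint6 (hint4.div_const ε)]
    exact integral_congr_ae (Filter.Eventually.of_forall fun q => EQ2 q.1 q.2)
  rw [intP2, intQ2] at R2
  -- Application 1 of the central lemma : A₁ ⊕ B₁ = log (Pstar/PS)
  have EP1 : ∀ x0 x1, P x0 x1
      * (((Real.log (p0 x0) - Real.log (cstar x0)) - (Real.log (p0S x0) - Real.log (cS x0)))
        + (Real.log (vstar x1) - Real.log (vS x1)))
      = P x0 x1 * Real.log (Pstar x0 x1 / PS x0 x1) := by
    intro x0 x1
    by_cases h : P x0 x1 = 0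
    · simp [h]
    · rw [Real.log_div (hPstarpos x0 x1 h).ne' (hPSpos x0 x1).ne',
        Hstar x0 x1 (hp0pos x0 x1 (hPstarpos x0 x1 h).ne').ne', HS x0 x1]
      ring
  have EQ1 : ∀ x0 x1, Pstar x0 x1
      * (((Real.log (p0 x0) - Real.log (cstar x0)) - (Real.log (p0S x0) - Real.log (cS x0)))
        + (Real.log (vstar x1) - Real.log (vS x1)))
      = Pstar x0 x1 * Real.log (Pstar x0 x1 / PS x0 x1) := by
    intro x0 x1
    by_cases h : Pstar x0 x1 = 0
    · simp [h]
    · rw [Real.log_div h (hPSpos x0 x1).ne', Hstar x0 x1 (hp0pos x0 x1 h).ne', HS x0 x1]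
      ring
  have iPf1 : Integrable (fun q : Euc D × Euc D => P q.1 q.2
      * (((Real.log (p0 q.1) - Real.log (cstar q.1))
            - (Real.log (p0S q.1) - Real.log (cS q.1)))
        + (Real.log (vstar q.2) - Real.log (vS q.2)))) := by
    refine (hint1.sub hint2').congr (Filter.Eventually.of_forall fun q => ?_)
    have h1 := EP1 q.1 q.2
    have h4 := E4 q.1 q.2
    simp only [Pi.sub_apply]
    linarith
  have iQf1 : Integrable (fun q : Euc D × Euc D => Pstar q.1 q.2
      * (((Real.log (p0 q.1) - Real.log (cstar q.1))
            - (Real.log (p0S q.1) - Real.log (cS q.1)))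
        + (Real.log (vstar q.2) - Real.log (vS q.2)))) :=
    hint2.congr (Filter.Eventually.of_forall fun q => (EQ1 q.1 q.2).symm)
  have R1 := marginal_integral_eq D P Pstar
    (fun x0 => (Real.log (p0 x0) - Real.log (cstar x0))
      - (Real.log (p0S x0) - Real.log (cS x0)))
    (fun x1 => Real.log (vstar x1) - Real.log (vS x1))
    hPnn hPstarnn iP iPstar hm0 hm1
    (((mlog p0 mp0).sub (mlog cstar mcstar)).sub ((mlog p0S mp0S).sub (mlog cS mcS)))
    ((mlog vstar ivstar.1).sub (mlog vS ivS.1)) iPf1 iQf1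
  have intP1 : ∫ q : Euc D × Euc D, P q.1 q.2
      * (((Real.log (p0 q.1) - Real.log (cstar q.1))
            - (Real.log (p0S q.1) - Real.log (cS q.1)))
        + (Real.log (vstar q.2) - Real.log (vS q.2)))
      = (∫ q : Euc D × Euc D, P q.1 q.2 * Real.log (P q.1 q.2 / PS q.1 q.2))
        - ∫ q : Euc D × Euc D, P q.1 q.2 * Real.log (P q.1 q.2 / Pstar q.1 q.2) := by
    rw [← integral_sub hint1 hint2']
    refine integral_congr_ae (Filter.Eventually.of_forall fun q => ?_)
    have h1 := EP1 q.1 q.2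
    have h4 := E4 q.1 q.2
    simp only [Pi.sub_apply]
    linarith
  have intQ1 : ∫ q : Euc D × Euc D, Pstar q.1 q.2
      * (((Real.log (p0 q.1) - Real.log (cstar q.1))
            - (Real.log (p0S q.1) - Real.log (cS q.1)))
        + (Real.log (vstar q.2) - Real.log (vS q.2)))
      = ∫ q : Euc D × Euc D, Pstar q.1 q.2 * Real.log (Pstar q.1 q.2 / PS q.1 q.2) :=
    integral_congr_ae (Filter.Eventually.of_forall fun q => EQ1 q.1 q.2)
  rw [intP1, intQ1] at R1
  -- KL(π‖π*) = Ĉ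
  have hsplit2 : ∫ q : Euc D × Euc D, P q.1 q.2 * Real.log (P q.1 q.2 / Pstar q.1 q.2)
      = (∫ q : Euc D × Euc D, P q.1 q.2 * Real.log (P q.1 q.2))
        - ∫ q : Euc D × Euc D, P q.1 q.2 * Real.log (Pstar q.1 q.2) := by
    rw [← integral_sub hint5 iPlogPstar]
    exact integral_congr_ae (Filter.Eventually.of_forall fun q => E2 q.1 q.2)
  have hChat' : ∫ q : Euc D × Euc D, P q.1 q.2 * Real.log (P q.1 q.2 / Pstar q.1 q.2)
      = Chat := by
    rw [hsplit2, hChat]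
    linear_combination -R2
  -- nonnegativity of KL(π*‖π^S)
  have hJ : 0 ≤ ∫ q : Euc D × Euc D, Pstar q.1 q.2 * Real.log (Pstar q.1 q.2 / PS q.1 q.2) := by
    have hle : (fun q : Euc D × Euc D => Pstar q.1 q.2 - PS q.1 q.2)
        ≤ fun q : Euc D × Euc D => Pstar q.1 q.2 * Real.log (Pstar q.1 q.2 / PS q.1 q.2) := by
      intro q
      simp only [Pi.sub_apply]
      rcases (hPstarnn q.1 q.2).lt_or_eq with h | h
      · have hps := hPSpos q.1 q.2
        have hlog : Real.log (PS q.1 q.2 / Pstar q.1 q.2)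
            ≤ PS q.1 q.2 / Pstar q.1 q.2 - 1 :=
          Real.log_le_sub_one_of_pos (div_pos hps h)
        rw [Real.log_div hps.ne' h.ne'] at hlog
        rw [Real.log_div h.ne' hps.ne']
        have hmul := mul_le_mul_of_nonneg_left hlog h.le
        have hcancel : Pstar q.1 q.2 * (PS q.1 q.2 / Pstar q.1 q.2) = PS q.1 q.2 :=
          mul_div_cancel₀ _ h.ne'
        rw [mul_sub, mul_sub, mul_one, hcancel] at hmul
        linarith
      · rw [← h]
        simp [le_of_lt (hPSpos q.1 q.2)]
    have h0 := integral_mono (iPstar.sub iPS) hint2 hle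
    simp only [Pi.sub_apply] at h0
    rw [integral_sub iPstar iPS, hPstarprob, hPSprob] at h0
    linarith
  constructor
  · linarith [R1, hChat']
  · linarith [R1, hJ]


end
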